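/- Let L ≥ K ≥ 1 be integers and let d be an integer with 0 ≤ d < C(L,K). If the integer i with 0 ≤ i ≤ L-K satisfies C(L,K) - C(L-i,K) ≤ d < C(L,K) - C(L-(i+1),K), then i ≤ ⌊(L - (K-1)/2) · (1 - (1 - d/C(L,K))^{1/K})⌋. -/

import Mathlib

open Real

open Finset

theorem stmt_5 (L K : ℕ) (hK : 1 ≤ K) (hKL : K ≤ L)
    (d : ℕ) (hd : d < Nat.choose L K)
    (i : ℕ) (hi : i ≤ L - K)
    (h1 : Nat.choose L K - Nat.choose (L - i) K ≤ d)
    (h2 : d < Nat.choose L K - Nat.choose (L - (i + 1)) K) :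
    (i : ℤ) ≤
      ⌊((L : ℝ) - ((K : ℝ) - 1) / 2) *
        (1 - (1 - (d : ℝ) / (Nat.choose L K : ℝ)) ^ ((1 : ℝ) / K))⌋ := by
  have hiK : i + K ≤ L := by omega
  have hKR : (1:ℝ) ≤ (K:ℝ) := by exact_mod_cast hK
  have hLR : (K:ℝ) ≤ (L:ℝ) := by exact_mod_cast hKL
  set A : ℝ := (L:ℝ) - ((K:ℝ) - 1)/2 with hA
  have hA0 : 0 < A := by rw [hA]; linarith
  have hC : 0 < (Nat.choose L K : ℝ) := by exact_mod_cast Nat.choose_pos hKL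
  have hLt : ∀ t ∈ range K, (0:ℝ) < (L:ℝ) - t := by
    intro t ht
    have : t < K := mem_range.mp ht
    have : (t:ℝ) < (K:ℝ) := by exact_mod_cast this
    linarith
  -- sum of (L - t)
  have hsum : ∑ t ∈ range K, ((L:ℝ) - t) = K * A := by
    have h2' : (∑ t ∈ range K, (t:ℕ)) * 2 = K * (K - 1) := Finset.sum_range_id_mul_two K
    have h2R : (∑ t ∈ range K, (t:ℝ)) * 2 = (K:ℝ) * ((K:ℝ) - 1) := by
      have := congrArg (Nat.cast : ℕ → ℝ) h2'
      push_cast [Nat.cast_sub hK] at this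
      linarith
    rw [Finset.sum_sub_distrib, Finset.sum_const, card_range, nsmul_eq_mul, hA]
    linarith
  set S : ℝ := ∑ t ∈ range K, 1 / ((L:ℝ) - t) with hSdef
  have hS : (K:ℝ) / A ≤ S := by
    have hcs : (∑ t ∈ range K, (1:ℝ)) ^ 2 ≤
        (∑ t ∈ range K, ((L:ℝ) - t)) * ∑ t ∈ range K, 1 / ((L:ℝ) - t) := by
      refine Finset.sum_sq_le_sum_mul_sum_of_sq_eq_mul _ (fun t ht => (hLt t ht).le)
        (fun t ht => (one_div_pos.mpr (hLt t ht)).le) (fun t ht => ?_)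
      rw [one_pow, mul_one_div, div_self (hLt t ht).ne']
    rw [Finset.sum_const, card_range, nsmul_eq_mul, mul_one, hsum] at hcs
    rw [div_le_iff₀ hA0]
    rw [← hSdef] at hcs
    nlinarith [hcs, hKR]
  set z : ℕ → ℝ := fun t => ((L:ℝ) - i - t) / ((L:ℝ) - t) with hz
  have hz0 : ∀ t ∈ range K, 0 ≤ z t := by
    intro t ht
    have htK : t < K := mem_range.mp ht
    have : (i:ℝ) + t ≤ (L:ℝ) := by
      have : i + t ≤ L := by omega
      exact_mod_cast this
    have hnum : (0:ℝ) ≤ (L:ℝ) - i - t := by linarith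
    exact div_nonneg hnum (hLt t ht).le
  -- product identity
  have hprod : ∏ t ∈ range K, z t = (Nat.choose (L - i) K : ℝ) / (Nat.choose L K : ℝ) := by
    have e1 : ∏ t ∈ range K, ((L:ℝ) - i - t) = ((L - i).descFactorial K : ℝ) := by
      rw [Nat.descFactorial_eq_prod_range]
      push_cast
      refine Finset.prod_congr rfl fun t ht => ?_
      have htK : t < K := mem_range.mp ht
      have h1' : t ≤ L - i := by omega
      have h2' : i ≤ L := by omega
      rw [Nat.cast_sub h1', Nat.cast_sub h2']
    have e2 : ∏ t ∈ range K, ((L:ℝ) - t) = (L.descFactorial K : ℝ) := by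
      rw [Nat.descFactorial_eq_prod_range]
      push_cast
      refine Finset.prod_congr rfl fun t ht => ?_
      have htK : t < K := mem_range.mp ht
      rw [Nat.cast_sub (by omega)]
    rw [hz, Finset.prod_div_distrib, e1, e2,
      Nat.descFactorial_eq_factorial_mul_choose, Nat.descFactorial_eq_factorial_mul_choose]
    push_cast
    rw [mul_div_mul_left]
    positivity
  -- AM-GM
  have hAM : (∏ t ∈ range K, z t) ^ ((1:ℝ)/K) ≤ 1 - (i:ℝ) / A := by
    have hgm := Real.geom_mean_le_arith_mean_weighted (range K) (fun _ => (1:ℝ)/K) z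
      (fun t _ => by positivity) (by
        rw [Finset.sum_const, card_range, nsmul_eq_mul]
        field_simp) hz0
    rw [Real.finset_prod_rpow _ _ hz0] at hgm
    refine hgm.trans ?_
    have hsum2 : ∑ t ∈ range K, (1:ℝ)/K * z t = 1 - ((i:ℝ)/K) * S := by
      have : ∀ t ∈ range K, (1:ℝ)/K * z t = 1/K - (i:ℝ)/K * (1 / ((L:ℝ) - t)) := by
        intro t ht
        have := hLt t ht
        simp only [hz]
        field_simp
        ring
      rw [Finset.sum_congr rfl this, Finset.sum_sub_distrib, Finset.sum_const, card_range,
        nsmul_eq_mul, ← Finset.mul_sum, ← hSdef]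
      field_simp
    rw [hsum2]
    have : (i:ℝ)/A ≤ (i:ℝ)/K * S := by
      have h1'' : (i:ℝ)/K * ((K:ℝ)/A) ≤ (i:ℝ)/K * S := by
        apply mul_le_mul_of_nonneg_left hS (by positivity)
      calc (i:ℝ)/A = (i:ℝ)/K * ((K:ℝ)/A) := by field_simp
        _ ≤ _ := h1''
    linarith
  -- base comparison
  have hbase : 1 - (d:ℝ) / (Nat.choose L K : ℝ) ≤ ∏ t ∈ range K, z t := by
    rw [hprod]
    have h1' : Nat.choose L K ≤ d + Nat.choose (L - i) K := by omega
    have h1R : (Nat.choose L K : ℝ) ≤ (d:ℝ) + (Nat.choose (L - i) K : ℝ) := by exact_mod_cast h1'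
    rw [sub_le_iff_le_add, ← add_div, le_div_iff₀ hC]
    nlinarith [hC]
  have hb0 : (0:ℝ) ≤ 1 - (d:ℝ) / (Nat.choose L K : ℝ) := by
    have : (d:ℝ) ≤ (Nat.choose L K : ℝ) := by exact_mod_cast hd.le
    have := div_le_one_of_le₀ this hC.le
    linarith
  have hrpow : (1 - (d:ℝ) / (Nat.choose L K : ℝ)) ^ ((1:ℝ)/K) ≤ 1 - (i:ℝ)/A :=
    le_trans (Real.rpow_le_rpow hb0 hbase (by positivity)) hAM
  rw [Int.le_floor]
  push_cast
  have hfin : (i:ℝ) ≤ A * (1 - (1 - (d:ℝ) / (Nat.choose L K : ℝ)) ^ ((1:ℝ)/K)) := by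
    have h1'' : (i:ℝ)/A ≤ 1 - (1 - (d:ℝ) / (Nat.choose L K : ℝ)) ^ ((1:ℝ)/K) := by linarith
    have := mul_le_mul_of_nonneg_left h1'' hA0.le
    rwa [mul_div_cancel₀] at this
    exact hA0.ne'
  exact hfin
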